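/- Let R be an m × n real matrix, λ > 0, and suppose σ ∈ ℝ^n satisfies the range condition σ = Rᵀ z for some z ∈ ℝ^m. Then the regularization error e = (RᵀR + λ I)^{-1} RᵀR σ − σ satisfies ‖e‖₂ ≤ √λ · ‖z‖₂ / 2 (in particular ‖e‖₂ ≤ C √λ ‖z‖₂ with C independent of λ, σ, z). -/
import Mathlib


open Matrix

/-- Euclidean norm of a vector in `ℝ^k`. -/
noncomputable def euclNorm {k : ℕ} (v : Fin k → ℝ) : ℝ := Real.sqrt (v ⬝ᵥ v)

private lemma dot_self_nonneg' {k : ℕ} (v : Fin k → ℝ) : 0 ≤ v ⬝ᵥ v :=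
  Finset.sum_nonneg fun i _ => mul_self_nonneg (v i)

private lemma cs' {k : ℕ} (u v : Fin k → ℝ) :
    u ⬝ᵥ v ≤ Real.sqrt (u ⬝ᵥ u) * Real.sqrt (v ⬝ᵥ v) := by
  have h := Finset.sum_mul_sq_le_sq_mul_sq (Finset.univ : Finset (Fin k)) u v
  have huu : u ⬝ᵥ u = ∑ i, u i ^ 2 := by simp [dotProduct, sq]
  have hvv : v ⬝ᵥ v = ∑ i, v i ^ 2 := by simp [dotProduct, sq]
  have h2 : (u ⬝ᵥ v) ^ 2 ≤ (u ⬝ᵥ u) * (v ⬝ᵥ v) := by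
    rw [huu, hvv]; exact h
  calc u ⬝ᵥ v ≤ |u ⬝ᵥ v| := le_abs_self _
    _ = Real.sqrt ((u ⬝ᵥ v) ^ 2) := (Real.sqrt_sq_eq_abs _).symm
    _ ≤ Real.sqrt ((u ⬝ᵥ u) * (v ⬝ᵥ v)) := Real.sqrt_le_sqrt h2
    _ = Real.sqrt (u ⬝ᵥ u) * Real.sqrt (v ⬝ᵥ v) := Real.sqrt_mul (dot_self_nonneg' u) _

private lemma dot_transpose' {m n : ℕ} (R : Matrix (Fin m) (Fin n) ℝ)
    (w : Fin n → ℝ) (u : Fin m → ℝ) :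
    w ⬝ᵥ Rᵀ.mulVec u = (R.mulVec w) ⬝ᵥ u := by
  rw [Matrix.dotProduct_mulVec, Matrix.vecMul_transpose]

/-- Tikhonov regularization error under the range (source) condition
`σ = Rᵀ z`: the error `e = (RᵀR + λI)⁻¹ RᵀR σ − σ` satisfies
`‖e‖₂ ≤ √λ ‖z‖₂ / 2`. -/
theorem tikhonov_regularization_error (m n : ℕ) (R : Matrix (Fin m) (Fin n) ℝ)
    (lam : ℝ) (hlam : 0 < lam) (σ : Fin n → ℝ) (z : Fin m → ℝ)
    (hrange : σ = Rᵀ.mulVec z) :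
    euclNorm
      ((Rᵀ * R + lam • (1 : Matrix (Fin n) (Fin n) ℝ))⁻¹.mulVec ((Rᵀ * R).mulVec σ) - σ) ≤
      Real.sqrt lam * euclNorm z / 2 := by
  set A : Matrix (Fin n) (Fin n) ℝ := Rᵀ * R with hA
  set M : Matrix (Fin n) (Fin n) ℝ := A + lam • 1 with hM
  have hpsd : A.PosSemidef := by
    simpa [hA] using Matrix.posSemidef_conjTranspose_mul_self R
  have hsm : (lam • (1 : Matrix (Fin n) (Fin n) ℝ)).PosDef := by
    rw [smul_one_eq_diagonal]
    exact Matrix.posDef_diagonal_iff.mpr fun _ => hlam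
  have hpd : M.PosDef := Matrix.PosDef.posSemidef_add hpsd hsm
  have hdet : IsUnit M.det := hpd.det_pos.ne'.isUnit
  set w : Fin n → ℝ := M⁻¹.mulVec (Rᵀ.mulVec z) with hw
  have hMw : M.mulVec w = Rᵀ.mulVec z := by
    rw [hw, Matrix.mulVec_mulVec, Matrix.mul_nonsing_inv M hdet, Matrix.one_mulVec]
  -- error vector equals (-lam) • w
  have he : M⁻¹.mulVec (A.mulVec σ) - σ = (-lam) • w := by
    have hσ : σ = M⁻¹.mulVec (M.mulVec σ) := by
      rw [Matrix.mulVec_mulVec, Matrix.nonsing_inv_mul M hdet, Matrix.one_mulVec]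
    calc M⁻¹.mulVec (A.mulVec σ) - σ
        = M⁻¹.mulVec (A.mulVec σ - M.mulVec σ) := by
          rw [Matrix.mulVec_sub]; rw [← hσ]
      _ = M⁻¹.mulVec ((-lam) • σ) := by
          congr 1
          rw [hM, Matrix.add_mulVec, Matrix.smul_mulVec, Matrix.one_mulVec,
            neg_smul]
          abel_nf
      _ = (-lam) • w := by
          rw [Matrix.mulVec_smul, hw, hrange]
  -- key identity:  ‖Rw‖² + lam ‖w‖² = ⟨Rw, z⟩
  have hkey : (R.mulVec w) ⬝ᵥ (R.mulVec w) + lam * (w ⬝ᵥ w) = (R.mulVec w) ⬝ᵥ z := by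
    have h1 : w ⬝ᵥ M.mulVec w = w ⬝ᵥ Rᵀ.mulVec z := by rw [hMw]
    rw [hM, Matrix.add_mulVec, Matrix.smul_mulVec, Matrix.one_mulVec,
      dotProduct_add, dotProduct_smul, smul_eq_mul, hA,
      ← Matrix.mulVec_mulVec] at h1
    simp only [dot_transpose'] at h1
    exact h1
  have ha : 0 ≤ (R.mulVec w) ⬝ᵥ (R.mulVec w) := dot_self_nonneg' _
  have hb : 0 ≤ z ⬝ᵥ z := dot_self_nonneg' z
  have ht : 0 ≤ w ⬝ᵥ w := dot_self_nonneg' w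
  have hcs := cs' (R.mulVec w) z
  -- lam * ⟨w,w⟩ ≤ ⟨z,z⟩ / 4
  have hbound : lam * (w ⬝ᵥ w) ≤ (z ⬝ᵥ z) / 4 := by
    set sa := Real.sqrt ((R.mulVec w) ⬝ᵥ (R.mulVec w)) with hsa
    set sb := Real.sqrt (z ⬝ᵥ z) with hsb
    have hsa2 : sa ^ 2 = (R.mulVec w) ⬝ᵥ (R.mulVec w) := Real.sq_sqrt ha
    have hsb2 : sb ^ 2 = z ⬝ᵥ z := Real.sq_sqrt hb
    nlinarith [sq_nonneg (sa - sb / 2)]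
  rw [he]
  -- compute norms
  have hnorm : euclNorm ((-lam) • w) = Real.sqrt (lam ^ 2 * (w ⬝ᵥ w)) := by
    unfold euclNorm
    congr 1
    simp only [smul_dotProduct, dotProduct_smul, smul_eq_mul]
    ring
  rw [hnorm]
  have h1 : lam ^ 2 * (w ⬝ᵥ w) ≤ lam * ((z ⬝ᵥ z) / 4) := by
    have := mul_le_mul_of_nonneg_left hbound hlam.le
    nlinarith
  calc Real.sqrt (lam ^ 2 * (w ⬝ᵥ w)) ≤ Real.sqrt (lam * ((z ⬝ᵥ z) / 4)) :=
        Real.sqrt_le_sqrt h1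
    _ = Real.sqrt lam * euclNorm z / 2 := by
        unfold euclNorm
        rw [Real.sqrt_mul hlam.le, show (z ⬝ᵥ z) / 4 = (Real.sqrt (z ⬝ᵥ z) / 2) ^ 2 by
          rw [div_pow, Real.sq_sqrt hb]; norm_num,
          Real.sqrt_sq (by positivity)]
        ring
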